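/- Every free-connex acyclic conjunctive query over a schema whose relation symbols have arity at most k has weak head arity at most k. -/
import Mathlib


/-- A relational atom (or fact): a relation symbol with a list of arguments.
Arguments are natural numbers, serving both as variables and as data values. -/
structure Atom where
  rel : ℕ
  args : List ℕ
deriving DecidableEq

/-- Apply a substitution to an atom. -/
def mapAtom (f : ℕ → ℕ) (A : Atom) : Atom := ⟨A.rel, A.args.map f⟩

/-- The variables of an atom. -/
def Atom.vars (A : Atom) : Finset ℕ := A.args.toFinset

/-- The variables of a finite set of atoms. -/
def varsOf (B : Finset Atom) : Finset ℕ := B.biUnion Atom.vars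

/-- A conjunctive query: a head atom and a finite set of body atoms. -/
structure CQ where
  head : Atom
  body : Finset Atom
deriving DecidableEq

/-- All variables of a conjunctive query. -/
def CQ.vars (Q : CQ) : Finset ℕ := Q.head.vars ∪ varsOf Q.body

/-- A schema: a set of relation symbols together with an arity function. -/
structure Schema where
  rels : Set ℕ
  ar : ℕ → ℕ

/-- An atom (or fact) over a schema. -/
def atomOver (σ : Schema) (A : Atom) : Prop :=
  A.rel ∈ σ.rels ∧ A.args.length = σ.ar A.rel

/-- `Q` is a (well-formed) conjunctive query over schema `σ`:
nonempty body of σ-atoms, head relation symbol not in σ, and safety. -/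
def isCQ (σ : Schema) (Q : CQ) : Prop :=
  Q.body.Nonempty ∧ (∀ A ∈ Q.body, atomOver σ A) ∧
  Q.head.rel ∉ σ.rels ∧ Q.head.vars ⊆ varsOf Q.body

/-- A database is a set of facts (finiteness is imposed where needed). -/
abbrev Database := Set Atom

/-- A database over a schema. -/
def isDBOver (σ : Schema) (D : Database) : Prop := ∀ F ∈ D, atomOver σ F

/-- The result of a conjunctive query on a database. -/
def evalCQ (Q : CQ) (D : Database) : Set Atom :=
  { F | ∃ ν : ℕ → ℕ, (∀ A ∈ Q.body, mapAtom ν A ∈ D) ∧ mapAtom ν Q.head = F }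

/-- Containment of conjunctive queries. -/
def containedCQ (Q1 Q2 : CQ) : Prop :=
  ∀ D : Database, D.Finite → evalCQ Q1 D ⊆ evalCQ Q2 D

/-- Equivalence of conjunctive queries. -/
def equivCQ (Q1 Q2 : CQ) : Prop :=
  ∀ D : Database, D.Finite → evalCQ Q1 D = evalCQ Q2 D

/-- A conjunctive query is minimal if no equivalent CQ has strictly fewer body atoms. -/
def isMinimal (Q : CQ) : Prop :=
  ∀ Q2 : CQ, equivCQ Q Q2 → Q.body.card ≤ Q2.body.card

/-- A homomorphism from `Q2` to `Q1`. -/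
def isHom (h : ℕ → ℕ) (Q2 Q1 : CQ) : Prop :=
  (∀ A ∈ Q2.body, mapAtom h A ∈ Q1.body) ∧ mapAtom h Q2.head = Q1.head

/-- A body homomorphism from `Q2` to `Q1`. -/
def isBodyHom (h : ℕ → ℕ) (Q2 Q1 : CQ) : Prop :=
  ∀ A ∈ Q2.body, mapAtom h A ∈ Q1.body

/-- A set of views over σ: each view is a CQ over σ and views have
pairwise distinct head relation symbols. -/
def isViewSet (σ : Schema) (𝒱 : Finset CQ) : Prop :=
  (∀ V ∈ 𝒱, isCQ σ V) ∧
  ∀ V ∈ 𝒱, ∀ W ∈ 𝒱, V ≠ W → V.head.rel ≠ W.head.rel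

/-- The 𝒱-defined database 𝒱(D). -/
def viewDB (𝒱 : Finset CQ) (D : Database) : Database :=
  ⋃ V ∈ 𝒱, evalCQ V D

/-- `Q'` is a CQ over the schema σ_𝒱 of the head relations of the views 𝒱. -/
def overViews (𝒱 : Finset CQ) (Q' : CQ) : Prop :=
  Q'.body.Nonempty ∧
  (∀ A ∈ Q'.body, ∃ V ∈ 𝒱, A.rel = V.head.rel ∧ A.args.length = V.head.args.length) ∧
  (∀ V ∈ 𝒱, Q'.head.rel ≠ V.head.rel) ∧
  Q'.head.vars ⊆ varsOf Q'.body

/-- `Q'` is a 𝒱-rewriting of `Q`: `Q'` is over σ_𝒱 and `Q'(𝒱(D)) = Q(D)`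
for every (finite) database `D` over σ. -/
def isRewriting (σ : Schema) (𝒱 : Finset CQ) (Q Q' : CQ) : Prop :=
  overViews 𝒱 Q' ∧
  ∀ D : Database, D.Finite → isDBOver σ D →
    evalCQ Q' (viewDB 𝒱 D) = evalCQ Q D

/-- `T` is a join tree for the atom set `B`. -/
def joinTreeProp (B : Finset Atom) (T : SimpleGraph {A : Atom // A ∈ B}) : Prop :=
  T.IsTree ∧
  ∀ (x : ℕ) (A A' : {A : Atom // A ∈ B}) (p : T.Walk A A'), p.IsPath →
    x ∈ A.1.vars → x ∈ A'.1.vars → ∀ C ∈ p.support, x ∈ C.1.vars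

/-- The atom set `B` has a join tree. -/
def hasJoinTree (B : Finset Atom) : Prop :=
  ∃ T : SimpleGraph {A : Atom // A ∈ B}, joinTreeProp B T

/-- A conjunctive query is acyclic if its body has a join tree. -/
def isAcyclicCQ (Q : CQ) : Prop := hasJoinTree Q.body

/-- A conjunctive query is free-connex acyclic. -/
def isFreeConnex (Q : CQ) : Prop :=
  isAcyclicCQ Q ∧ hasJoinTree (insert Q.head Q.body)

/-- The bridge variables of `𝒜 ⊆ body(Q)`. -/
def bvars (Q : CQ) (𝒜 : Finset Atom) : Finset ℕ :=
  varsOf 𝒜 ∩ (Q.head.vars ∪ varsOf (Q.body \ 𝒜))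

/-- An application of a view `V`: a substitution that does not unify any
quantified variable of `V` with another variable of `V`. -/
def isApplication (V : CQ) (α : ℕ → ℕ) : Prop :=
  ∀ x ∈ varsOf V.body, x ∉ V.head.vars →
    ∀ y ∈ CQ.vars V, y ≠ x → α x ≠ α y

/-- The query α(V). -/
def applyCQ (α : ℕ → ℕ) (V : CQ) : CQ :=
  ⟨mapAtom α V.head, V.body.image (mapAtom α)⟩

/-- `(𝒜, V, α, ψ)` is a cover description for `Q`. -/
def isCoverDesc (Q : CQ) (𝒜 : Finset Atom) (V : CQ) (α ψ : ℕ → ℕ) : Prop :=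
  𝒜 ⊆ Q.body ∧ isApplication V α ∧
  𝒜 ⊆ V.body.image (mapAtom α) ∧
  bvars Q 𝒜 ⊆ V.head.vars.image α ∧
  isBodyHom ψ (applyCQ α V) Q ∧
  ∀ x ∈ varsOf 𝒜, ψ x = x

/-- A cover partition for `Q` over `𝒱`: a collection of cover descriptions
whose atom sets partition `body(Q)`. -/
def isCoverPartition (Q : CQ) (𝒱 : Finset CQ) (m : ℕ)
    (𝒜 : Fin m → Finset Atom) (V : Fin m → CQ) (α ψ : Fin m → ℕ → ℕ) : Prop :=
  (∀ i, V i ∈ 𝒱 ∧ isCoverDesc Q (𝒜 i) (V i) (α i) (ψ i)) ∧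
  ∀ A ∈ Q.body, ∃! i, A ∈ 𝒜 i

/-- Consistency of a cover partition: a variable of any `α_j(V_j)` lies in the
range of another `α_i` only if it also lies in `bvars(𝒜_j)`. -/
def isConsistent (Q : CQ) (m : ℕ) (𝒜 : Fin m → Finset Atom) (V : Fin m → CQ)
    (α : Fin m → ℕ → ℕ) : Prop :=
  ∀ i j : Fin m, i ≠ j → ∀ z ∈ CQ.vars (applyCQ (α j) (V j)),
    (∃ x ∈ CQ.vars (V i), α i x = z) → z ∈ bvars Q (𝒜 j)

/-- The query `Q_𝒞` induced by a (consistent) cover partition. -/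
def inducedCQ (Q : CQ) (m : ℕ) (V : Fin m → CQ) (α : Fin m → ℕ → ℕ) : CQ :=
  ⟨Q.head, Finset.image (fun i => mapAtom (α i) (V i).head) Finset.univ⟩

/-- Quantified variable disjointness for a family of view applications. -/
def QVD (m : ℕ) (V : Fin m → CQ) (α : Fin m → ℕ → ℕ) : Prop :=
  ∀ i j : Fin m, i ≠ j → ∀ x ∈ varsOf (V i).body, x ∉ (V i).head.vars →
    ∀ y ∈ CQ.vars (V j), α i x ≠ α j y

/-- `QE` is an expansion of `Q'` with respect to the views `𝒱`. -/
def isExpansion (𝒱 : Finset CQ) (Q' QE : CQ) : Prop :=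
  ∃ (m : ℕ) (A' : Fin m → Atom) (V : Fin m → CQ) (α : Fin m → ℕ → ℕ),
    (∀ i, V i ∈ 𝒱 ∧ isApplication (V i) (α i) ∧ A' i = mapAtom (α i) (V i).head) ∧
    Q'.body = Finset.image A' Finset.univ ∧
    QVD m V α ∧
    QE.head = Q'.head ∧
    QE.body = Finset.biUnion Finset.univ (fun i => (V i).body.image (mapAtom (α i)))

/-- `atoms(x)`: the body atoms of `Q` containing the variable `x`. -/
def atomsWith (Q : CQ) (x : ℕ) : Finset Atom :=
  Q.body.filter (fun A => x ∈ A.vars)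

/-- Hierarchical conjunctive queries. -/
def isHierarchical (Q : CQ) : Prop :=
  ∀ x y : ℕ, atomsWith Q x ⊆ atomsWith Q y ∨ atomsWith Q y ⊆ atomsWith Q x ∨
    atomsWith Q x ∩ atomsWith Q y = ∅

/-- q-hierarchical conjunctive queries. -/
def isQHierarchical (Q : CQ) : Prop :=
  isHierarchical Q ∧ ∀ x y : ℕ, atomsWith Q x ⊂ atomsWith Q y →
    x ∈ Q.head.vars → y ∈ Q.head.vars

/-- `P` is a partition of `body(Q)` witnessing weak head arity at most `k`. -/
def witnessesWHA (Q : CQ) (k n : ℕ) (P : Fin n → Finset Atom) : Prop :=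
  (∀ i, (P i).Nonempty) ∧ (∀ i, P i ⊆ Q.body) ∧ (∀ A ∈ Q.body, ∃! i, A ∈ P i) ∧
  (∀ i, (varsOf (P i) ∩ Q.head.vars).card ≤ k) ∧
  (∀ i j, i ≠ j → ∀ x ∈ varsOf (P i), x ∈ varsOf (P j) → x ∈ Q.head.vars)

/-- `Q` has weak head arity at most `k`. -/
def hasWHAle (Q : CQ) (k : ℕ) : Prop := ∃ n P, witnessesWHA Q k n P

/-- The weak head arity of `Q`. -/
noncomputable def weakHeadArity (Q : CQ) : ℕ := sInf {k | hasWHAle Q k}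

/-- The cover graph of `Q`: vertices are the body atoms, with an edge between
two atoms iff they share a variable not occurring in the head. -/
def coverGraph (Q : CQ) : SimpleGraph {A : Atom // A ∈ Q.body} :=
  SimpleGraph.fromRel (fun A B => ∃ x, x ∈ A.1.vars ∧ x ∈ B.1.vars ∧ x ∉ Q.head.vars)

/-- A subset `s` of the atom set `B` is connected in the (join) tree `T`. -/
def connectedIn (B : Finset Atom) (T : SimpleGraph {A : Atom // A ∈ B}) (s : Finset Atom) : Prop :=
  (T.induce {A : {A : Atom // A ∈ B} | A.1 ∈ s}).Connected


section TreeHelpers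

open SimpleGraph Walk
set_option linter.unusedSectionVars false

variable {V : Type*} [DecidableEq V] {G : SimpleGraph V}

private lemma getVert_one_append {u v w : V} (r : G.Walk u v) (s : G.Walk v w)
    (hr : 1 ≤ r.length) : (r.append s).getVert 1 = r.getVert 1 := by
  rw [Walk.getVert_append]
  split_ifs with h
  · rfl
  · have h1 : r.length = 1 := le_antisymm (not_lt.mp h) hr
    rw [h1]
    simp only [Nat.sub_self, Walk.getVert_zero]
    conv_rhs => rw [← h1]
    rw [Walk.getVert_length]

private lemma isPath_getVert_one_ne {u v : V} {p : G.Walk u v} (hp : p.IsPath)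
    (hl : 1 ≤ p.length) : p.getVert 1 ≠ u := by
  cases p with
  | nil => simp at hl
  | cons h q =>
    rw [Walk.getVert_cons_succ, Walk.getVert_zero]
    rintro rfl
    exact ((Walk.cons_isPath_iff _ _).mp hp).2 q.start_mem_support

/-- The unique path between two vertices of a tree. -/
noncomputable def treePath (hT : G.IsTree) (u v : V) : G.Walk u v :=
  (hT.existsUnique_path u v).exists.choose

lemma treePath_isPath (hT : G.IsTree) (u v : V) : (treePath hT u v).IsPath :=
  (hT.existsUnique_path u v).exists.choose_spec

lemma treePath_unique (hT : G.IsTree) {u v : V} {p : G.Walk u v} (hp : p.IsPath) :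
    p = treePath hT u v :=
  (hT.existsUnique_path u v).unique hp (treePath_isPath hT u v)

lemma treePath_length_pos (hT : G.IsTree) {u v : V} (h : u ≠ v) :
    1 ≤ (treePath hT u v).length := by
  by_contra hlt
  exact h (Walk.eq_of_length_eq_zero (Nat.lt_one_iff.mp (not_le.mp hlt)))

/-- The second vertex on the tree path from `H` to `a`. -/
noncomputable def treeAnchor (hT : G.IsTree) (H a : V) : V :=
  (treePath hT H a).getVert 1

lemma treeAnchor_ne (hT : G.IsTree) {H a : V} (ha : a ≠ H) : treeAnchor hT H a ≠ H :=
  isPath_getVert_one_ne (treePath_isPath hT H a) (treePath_length_pos hT (Ne.symm ha))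

lemma treeAnchor_mem_support (hT : G.IsTree) {H a : V} (ha : a ≠ H) :
    treeAnchor hT H a ∈ (treePath hT H a).support := by
  rw [Walk.mem_support_iff_exists_getVert]
  exact ⟨1, rfl, treePath_length_pos hT (Ne.symm ha)⟩

lemma treeAnchor_adj_eq (hT : G.IsTree) {H a b : V} (ha : a ≠ H) (hb : b ≠ H)
    (hadj : G.Adj b a) : treeAnchor hT H a = treeAnchor hT H b := by
  set p := treePath hT H b with hpdef
  have hp : p.IsPath := treePath_isPath hT H b
  have hpl : 1 ≤ p.length := treePath_length_pos hT (Ne.symm hb)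
  by_cases hmem : a ∈ p.support
  · have hq : (p.takeUntil a hmem).IsPath := hp.takeUntil hmem
    have hql : 1 ≤ (p.takeUntil a hmem).length := by
      by_contra hlt
      exact ha ((Walk.eq_of_length_eq_zero (Nat.lt_one_iff.mp (not_le.mp hlt))).symm)
    have heqp : treePath hT H a = p.takeUntil a hmem := (treePath_unique hT hq).symm
    show (treePath hT H a).getVert 1 = p.getVert 1
    rw [heqp]
    conv_rhs => rw [← p.take_spec hmem]
    rw [getVert_one_append _ _ hql]
  · have hp' : (p.concat hadj).IsPath := by
      rw [← Walk.isPath_reverse_iff, Walk.reverse_concat]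
      refine hp.reverse.cons ?_
      rwa [Walk.support_reverse, List.mem_reverse]
    have heqp : treePath hT H a = p.concat hadj := (treePath_unique hT hp').symm
    show (treePath hT H a).getVert 1 = p.getVert 1
    rw [heqp, Walk.concat_eq_append, getVert_one_append _ _ hpl]

lemma treeAnchor_eq_of_walk (hT : G.IsTree) {H a b : V} (w : G.Walk a b)
    (hH : H ∉ w.support) : treeAnchor hT H a = treeAnchor hT H b := by
  induction w with
  | nil => rfl
  | @cons a c b h q ih =>
    rw [Walk.support_cons, List.mem_cons] at hH
    push_neg at hH
    have ha : a ≠ H := fun h' => hH.1 h'.symm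
    have hc : c ≠ H := fun h' => hH.2 (h' ▸ q.start_mem_support)
    exact ((treeAnchor_adj_eq hT hc ha h).symm).trans (ih hH.2)

end TreeHelpers

/-- Every free-connex acyclic CQ over a schema whose relation symbols
have arity at most `k` has weak head arity at most `k`. -/
theorem statement12 (σ : Schema) (k : ℕ) (har : ∀ r ∈ σ.rels, σ.ar r ≤ k)
    (Q : CQ) (hQ : isCQ σ Q) (hfc : isFreeConnex Q) :
    weakHeadArity Q ≤ k := by
  classical
  obtain ⟨hne, hatoms, hhrel, hsafe⟩ := hQ
  obtain ⟨-, T, hTtree, hTjoin⟩ := hfc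
  have hhb : Q.head ∉ Q.body := fun h => hhrel (hatoms _ h).1
  let H : {A : Atom // A ∈ insert Q.head Q.body} := ⟨Q.head, Finset.mem_insert_self _ _⟩
  let vtx : (A : Atom) → A ∈ Q.body → {A : Atom // A ∈ insert Q.head Q.body} :=
    fun A h => ⟨A, Finset.mem_insert_of_mem h⟩
  have hvtx_ne : ∀ (A) (h : A ∈ Q.body), vtx A h ≠ H := by
    intro A h hEq
    have : A = Q.head := congrArg Subtype.val hEq
    exact hhb (this ▸ h)
  let anch : Atom → Atom :=
    fun A => if h : A ∈ Q.body then (treeAnchor hTtree H (vtx A h)).1 else A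
  have hanch : ∀ (A) (h : A ∈ Q.body), anch A = (treeAnchor hTtree H (vtx A h)).1 :=
    fun A h => dif_pos h
  have hanch_mem : ∀ A ∈ Q.body, anch A ∈ Q.body := by
    intro A h
    rw [hanch A h]
    have h1 : treeAnchor hTtree H (vtx A h) ≠ H := treeAnchor_ne hTtree (hvtx_ne A h)
    have h2 := (treeAnchor hTtree H (vtx A h)).2
    rw [Finset.mem_insert] at h2
    rcases h2 with h2 | h2
    · exact absurd (Subtype.ext h2) h1
    · exact h2
  have hcapture : ∀ (A) (h : A ∈ Q.body), ∀ x ∈ A.vars, x ∈ Q.head.vars → x ∈ (anch A).vars := by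
    intro A h x hxA hxH
    rw [hanch A h]
    exact hTjoin x H (vtx A h) (treePath hTtree H (vtx A h)) (treePath_isPath _ _ _)
      hxH hxA _ (treeAnchor_mem_support hTtree (hvtx_ne A h))
  have hcross : ∀ (A) (hA : A ∈ Q.body) (A') (hA' : A' ∈ Q.body), anch A ≠ anch A' →
      ∀ x, x ∈ A.vars → x ∈ A'.vars → x ∈ Q.head.vars := by
    intro A hA A' hA' hanne x hx hx'
    by_cases hH : H ∈ (treePath hTtree (vtx A hA) (vtx A' hA')).support
    · exact hTjoin x _ _ _ (treePath_isPath _ _ _) hx hx' H hH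
    · refine absurd (congrArg Subtype.val
        (treeAnchor_eq_of_walk hTtree (treePath hTtree (vtx A hA) (vtx A' hA')) hH)) ?_
      rw [hanch A hA, hanch A' hA'] at hanne
      exact hanne
  have hWHA : hasWHAle Q k := by
    set S : Finset Atom := Q.body.image anch with hS
    refine ⟨S.card, fun i => Q.body.filter (fun A => anch A = (S.equivFin.symm i).1),
      ?_, ?_, ?_, ?_, ?_⟩
    · intro i
      obtain ⟨A, hA, hAeq⟩ := Finset.mem_image.mp (S.equivFin.symm i).2
      exact ⟨A, Finset.mem_filter.mpr ⟨hA, hAeq⟩⟩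
    · intro i
      exact Finset.filter_subset _ _
    · intro A hA
      refine ⟨S.equivFin ⟨anch A, Finset.mem_image_of_mem _ hA⟩, ?_, ?_⟩
      · refine Finset.mem_filter.mpr ⟨hA, ?_⟩
        rw [Equiv.symm_apply_apply]
      · intro j hj
        have hj2 := (Finset.mem_filter.mp hj).2
        calc j = S.equivFin (S.equivFin.symm j) := (Equiv.apply_symm_apply _ _).symm
          _ = _ := congrArg _ (Subtype.ext hj2.symm)
    · intro i
      have hNb : ((S.equivFin.symm i).1 : Atom) ∈ Q.body := by
        obtain ⟨A, hA, hAeq⟩ := Finset.mem_image.mp (S.equivFin.symm i).2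
        exact hAeq ▸ hanch_mem A hA
      have hsub : varsOf (Q.body.filter (fun A => anch A = (S.equivFin.symm i).1)) ∩
          Q.head.vars ⊆ ((S.equivFin.symm i).1 : Atom).vars := by
        intro x hx
        obtain ⟨hx1, hx2⟩ := Finset.mem_inter.mp hx
        obtain ⟨A, hA, hxA⟩ := Finset.mem_biUnion.mp hx1
        obtain ⟨hAb, hAe⟩ := Finset.mem_filter.mp hA
        have := hcapture A hAb x hxA hx2
        rwa [hAe] at this
      calc (varsOf (Q.body.filter (fun A => anch A = (S.equivFin.symm i).1)) ∩
            Q.head.vars).card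
          ≤ ((S.equivFin.symm i).1 : Atom).vars.card := Finset.card_le_card hsub
        _ ≤ ((S.equivFin.symm i).1 : Atom).args.length := List.toFinset_card_le _
        _ = σ.ar ((S.equivFin.symm i).1 : Atom).rel := (hatoms _ hNb).2
        _ ≤ k := har _ (hatoms _ hNb).1
    · intro i j hij x hxi hxj
      obtain ⟨A, hA, hxA⟩ := Finset.mem_biUnion.mp hxi
      obtain ⟨A', hA', hxA'⟩ := Finset.mem_biUnion.mp hxj
      obtain ⟨hAb, hAe⟩ := Finset.mem_filter.mp hA
      obtain ⟨hA'b, hA'e⟩ := Finset.mem_filter.mp hA'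
      refine hcross A hAb A' hA'b ?_ x hxA hxA'
      rw [hAe, hA'e]
      intro hEq
      exact hij (S.equivFin.symm.injective (Subtype.ext hEq))
  exact Nat.sInf_le hWHA
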